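/- Let K be a polyhedral subcomplex of a lattice triangulation of a polygon, with 0-simplices K₀, such that the 2-cells of K correspond bijectively to vertices of a graph Γ, the 1-cells of K correspond bijectively to edges of Γ, and a vertex v of Γ is an endpoint of edge E of Γ if and only if the 2-cell dual to v contains the 1-cell dual to E as a face. Then the connected components of |K| ∖ |K₀| are in bijection with the connected components of Γ. -/

import Mathlib

/-- A finite multigraph with (arbitrarily) oriented edges; loops and parallel
edges are allowed.  `ends e` records the two endpoints of the edge `e`. -/
structure OMGraph where
  V : Type
  E : Type
  [fintypeV : Fintype V]
  [fintypeE : Fintype E]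
  [decEqV : DecidableEq V]
  [decEqE : DecidableEq E]
  ends : E → V × V

attribute [instance] OMGraph.fintypeV OMGraph.fintypeE OMGraph.decEqV OMGraph.decEqE

namespace OMGraph

/-- The degree of a vertex (a loop counts twice). -/
def deg (G : OMGraph) (v : G.V) : ℕ :=
  (Finset.univ.filter fun e : G.E => (G.ends e).1 = v).card +
  (Finset.univ.filter fun e : G.E => (G.ends e).2 = v).card

/-- A graph is trivalent when every vertex has degree `3`. -/
def Trivalent (G : OMGraph) : Prop := ∀ v, G.deg v = 3

/-- Genus (first Betti number, for a connected graph) equal to `3`:  `E − V + 1 = 3`. -/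
def GenusThree (G : OMGraph) : Prop :=
  (Fintype.card G.E : ℤ) - (Fintype.card G.V : ℤ) + 1 = 3

/-- Indicator vector of a set of edges, over `ℤ/2`. -/
def indicator (G : OMGraph) (S : Finset G.E) : G.E → ZMod 2 :=
  fun e => if e ∈ S then 1 else 0

/-- The mod-2 boundary map on edge chains. -/
def bnd (G : OMGraph) (f : G.E → ZMod 2) : G.V → ZMod 2 := fun v =>
  ∑ e : G.E, f e *
    ((if (G.ends e).1 = v then 1 else 0) + (if (G.ends e).2 = v then 1 else 0))

/-- An edge set is a cycle set (element of the cycle space) when its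
indicator has zero mod-2 boundary. -/
def IsCycleSet (G : OMGraph) (S : Finset G.E) : Prop :=
  G.bnd (G.indicator S) = 0

/-- A circuit: a minimal nonempty cycle set, i.e. a subgraph homeomorphic to `S¹`. -/
def IsCircuit (G : OMGraph) (S : Finset G.E) : Prop :=
  S.Nonempty ∧ G.IsCycleSet S ∧
    ∀ T ⊆ S, T.Nonempty → G.IsCycleSet T → T = S

/-- The vertex support of an edge set. -/
def verts (G : OMGraph) (S : Finset G.E) : Finset G.V :=
  S.image (fun e => (G.ends e).1) ∪ S.image (fun e => (G.ends e).2)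

/-- Adjacency of vertices. -/
def Adj (G : OMGraph) (u v : G.V) : Prop :=
  ∃ e, G.ends e = (u, v) ∨ G.ends e = (v, u)

/-- Connectedness. -/
def Connected (G : OMGraph) : Prop :=
  ∀ u v, Relation.ReflTransGen G.Adj u v

/-- Isomorphism of multigraphs (orientations of edges are irrelevant). -/
def Iso (G H : OMGraph) : Prop :=
  ∃ (φ : G.V ≃ H.V) (ψ : G.E ≃ H.E), ∀ e,
    H.ends (ψ e) = (φ (G.ends e).1, φ (G.ends e).2) ∨
    H.ends (ψ e) = (φ (G.ends e).2, φ (G.ends e).1)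

/-- The lollipop graph of genus 3: a central vertex `0` joined by bridge edges to
three vertices `1, 2, 3`, each of which carries a loop. -/
def lollipop : OMGraph where
  V := Fin 4
  E := Fin 6
  ends := fun e =>
    if h : (e : ℕ) < 3 then
      ((0 : Fin 4), (⟨(e : ℕ) + 1, by omega⟩ : Fin 4))
    else
      ((⟨(e : ℕ) - 2, by have := e.isLt; omega⟩ : Fin 4),
       (⟨(e : ℕ) - 2, by have := e.isLt; omega⟩ : Fin 4))

/-- The homology classes of `C₁, C₂, C₃` generate `H₁(G)` (the mod-2 cycle space). -/
def SpansCycleSpace (G : OMGraph) (C₁ C₂ C₃ : Finset G.E) : Prop :=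
  ∀ f : G.E → ZMod 2, G.bnd f = 0 →
    f ∈ Submodule.span (ZMod 2)
      ({G.indicator C₁, G.indicator C₂, G.indicator C₃} : Set (G.E → ZMod 2))

/-- Homological independence of three cycles. -/
def HomIndep (G : OMGraph) (C₁ C₂ C₃ : Finset G.E) : Prop :=
  LinearIndependent (ZMod 2) ![G.indicator C₁, G.indicator C₂, G.indicator C₃]

end OMGraph

section Aux4p7
open Set MeasureTheory


/-- A line (affine span of two points) in the plane has measure zero. -/
lemma my_line_measure_zero (x p : ℝ × ℝ) :
    volume ((affineSpan ℝ {x, p} : AffineSubspace ℝ (ℝ × ℝ)) : Set (ℝ × ℝ)) = 0 := by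
  apply Measure.addHaar_affineSubspace
  intro h
  have h2 : vectorSpan ℝ ({x, p} : Set (ℝ × ℝ)) = ⊤ := by
    rw [← direction_affineSpan, h, AffineSubspace.direction_top]
  have hc : Collinear ℝ ({x, p} : Set (ℝ × ℝ)) := collinear_pair ℝ x p
  rw [collinear_iff_rank_le_one, h2] at hc
  have h3 : Module.rank ℝ (⊤ : Submodule ℝ (ℝ × ℝ)) = 2 := by
    rw [rank_top]; rw [rank_prod', Module.rank_self]; exact one_add_one_eq_two
  rw [h3] at hc
  norm_num at hc

/-- A nondegenerate segment is an infinite set. -/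
lemma my_segment_infinite {a b : ℝ × ℝ} (h : a ≠ b) : (segment ℝ a b).Infinite := by
  rw [segment_eq_image']
  have hinj : InjOn (fun θ : ℝ => a + θ • (b - a)) (Icc 0 1) := by
    intro θ₁ _ θ₂ _ hEq
    have hba : b - a ≠ 0 := sub_ne_zero.mpr (Ne.symm h)
    exact smul_left_injective ℝ hba (add_left_cancel hEq)
  exact (Set.infinite_image_iff hinj).mpr (Set.Icc_infinite zero_lt_one)

/-- A convex, non-collinear subset of the plane minus a finite set is connected. -/
lemma my_convex_diff_finite_isConnected {s : Set (ℝ × ℝ)} (hs : Convex ℝ s)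
    (hcol : ¬ Collinear ℝ s) {F : Set (ℝ × ℝ)} (hF : F.Finite) :
    IsConnected (s \ F) := by
  have hspan : affineSpan ℝ s = ⊤ := by
    by_contra h
    rcases s.eq_empty_or_nonempty with rfl | hne
    · exact hcol (collinear_empty ℝ _)
    have hv : vectorSpan ℝ s ≠ ⊤ := fun hvt => h
      ((AffineSubspace.affineSpan_eq_top_iff_vectorSpan_eq_top_of_nonempty ℝ _ _ hne).mpr hvt)
    apply hcol
    rw [collinear_iff_finrank_le_one]
    have hlt : Module.finrank ℝ (vectorSpan ℝ s) < Module.finrank ℝ (ℝ × ℝ) := by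
      have := Submodule.finrank_lt_finrank_of_lt (lt_top_iff_ne_top.mpr hv)
      rwa [finrank_top] at this
    have h2 : Module.finrank ℝ (ℝ × ℝ) = 2 := by simp [Module.finrank_prod]
    omega
  have hint : (interior s).Nonempty := by
    rw [hs.interior_nonempty_iff_affineSpan_eq_top]; exact hspan
  have hpos : 0 < volume (interior s) := isOpen_interior.measure_pos volume hint
  have hne : (s \ F).Nonempty := by
    by_contra h
    rw [not_nonempty_iff_eq_empty, diff_eq_empty] at h
    exact absurd (measure_mono_null (interior_subset.trans h) (hF.measure_zero volume)) hpos.ne'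
  have key : ∀ x ∈ s \ F, ∀ y ∈ s \ F, JoinedIn (s \ F) x y := by
    intro x hx y hy
    set B : Set (ℝ × ℝ) := ⋃ p ∈ F,
      (((affineSpan ℝ {x, p} : AffineSubspace ℝ (ℝ × ℝ)) : Set (ℝ × ℝ)) ∪
       ((affineSpan ℝ {y, p} : AffineSubspace ℝ (ℝ × ℝ)) : Set (ℝ × ℝ))) with hB
    have hBnull : volume B = 0 := by
      refine (measure_biUnion_null_iff hF.countable).mpr fun p _ => ?_
      exact measure_union_null (my_line_measure_zero x p) (my_line_measure_zero y p)
    obtain ⟨z, hzi, hzB⟩ : ∃ z ∈ interior s, z ∉ B := by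
      by_contra h
      push_neg at h
      exact absurd (measure_mono_null h hBnull) hpos.ne'
    have hzs : z ∈ s := interior_subset hzi
    have seg : ∀ a : ℝ × ℝ, a ∈ s \ F →
        (∀ p ∈ F, z ∉ ((affineSpan ℝ {a, p} : AffineSubspace ℝ (ℝ × ℝ)) : Set (ℝ × ℝ))) →
        segment ℝ a z ⊆ s \ F := by
      intro a ha hlines q hq
      refine ⟨hs.segment_subset ha.1 hzs hq, fun hqF => ?_⟩
      have haq : a ≠ q := fun h => ha.2 (h ▸ hqF)
      have hsub : segment ℝ a z ⊆ (affineSpan ℝ ({a, z} : Set (ℝ × ℝ)) : Set (ℝ × ℝ)) := by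
        rw [← convexHull_pair]
        refine convexHull_min ?_ (affineSpan ℝ ({a, z} : Set (ℝ × ℝ))).convex
        exact subset_affineSpan ℝ _
      have hcol3 : Collinear ℝ ({a, q, z} : Set (ℝ × ℝ)) := by
        have hc : Collinear ℝ ((affineSpan ℝ ({a, z} : Set (ℝ × ℝ)) : Set (ℝ × ℝ))) := by
          rw [collinear_iff_rank_le_one]
          have hvs : vectorSpan ℝ ((affineSpan ℝ ({a, z} : Set (ℝ × ℝ)) : Set (ℝ × ℝ))) =
              vectorSpan ℝ ({a, z} : Set (ℝ × ℝ)) := by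
            rw [← direction_affineSpan, ← direction_affineSpan,
              AffineSubspace.affineSpan_coe]
          rw [hvs]
          exact collinear_pair ℝ a z
        refine hc.subset ?_
        rintro u (rfl | rfl | rfl)
        · exact subset_affineSpan ℝ _ (by simp)
        · exact hsub hq
        · exact subset_affineSpan ℝ _ (by simp)
      have hz_line : z ∈ (affineSpan ℝ ({a, q} : Set (ℝ × ℝ))) :=
        hcol3.mem_affineSpan_of_mem_of_ne (by simp) (by simp) (by simp) haq
      exact hlines q hqF hz_line
    have hlx : ∀ p ∈ F, z ∉ ((affineSpan ℝ {x, p} : AffineSubspace ℝ (ℝ × ℝ)) : Set (ℝ × ℝ)) :=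
      fun p hp hzmem => hzB (mem_biUnion hp (Or.inl hzmem))
    have hly : ∀ p ∈ F, z ∉ ((affineSpan ℝ {y, p} : AffineSubspace ℝ (ℝ × ℝ)) : Set (ℝ × ℝ)) :=
      fun p hp hzmem => hzB (mem_biUnion hp (Or.inr hzmem))
    have J1 : JoinedIn (s \ F) x z := by
      have hpc : IsPathConnected (segment ℝ x z) :=
        (convex_segment x z).isPathConnected ⟨x, left_mem_segment ℝ x z⟩
      exact (hpc.joinedIn x (left_mem_segment ℝ x z) z (right_mem_segment ℝ x z)).mono
        (seg x hx hlx)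
    have J2 : JoinedIn (s \ F) y z := by
      have hpc : IsPathConnected (segment ℝ y z) :=
        (convex_segment y z).isPathConnected ⟨y, left_mem_segment ℝ y z⟩
      exact (hpc.joinedIn y (left_mem_segment ℝ y z) z (right_mem_segment ℝ y z)).mono
        (seg y hy hly)
    exact J1.trans J2.symm
  obtain ⟨x₀, hx₀⟩ := hne
  exact (IsPathConnected.isConnected ⟨x₀, hx₀, fun {y} hy => key x₀ hx₀ y hy⟩)

end Aux4p7

open OMGraph in
/-- Lemma 4.7 of the paper: let `K = (K₂, K₁, K₀)` be a polyhedral subcomplex of a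
lattice triangulation of a polygon in `ℝ²`, and let `Γ` be a graph whose vertices
correspond bijectively to the 2-cells of `K` (via `fV`), whose edges correspond
bijectively to the 1-cells of `K` (via `fE`), and such that a vertex `w` of `Γ` is an
endpoint of an edge `E` if and only if the 2-cell dual to `w` contains the 1-cell dual
to `E` as a face.  Then the connected components of `|K| ∖ |K₀|` are in bijection with
the connected components of `Γ`. -/
theorem components_of_complement_biject_graph_components
    (K₂ K₁ : Finset (Finset (ℝ × ℝ))) (K₀ : Finset (ℝ × ℝ))
    (h2card : ∀ Δ ∈ K₂, Δ.card = 3) (h1card : ∀ e ∈ K₁, e.card = 2)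
    (h2indep : ∀ Δ ∈ K₂, ¬ Collinear ℝ (Δ : Set (ℝ × ℝ)))
    (hlat : ∀ v ∈ K₀, ∃ a b : ℤ, v = (((a : ℝ), (b : ℝ)) : ℝ × ℝ))
    -- subcomplex: faces of cells belong to the complex
    (hface21 : ∀ Δ ∈ K₂, ∀ e ⊆ Δ, e.card = 2 → e ∈ K₁)
    (hface10 : ∀ e ∈ K₁, ∀ v ∈ e, v ∈ K₀)
    -- part of a triangulation: cells meet along common faces
    (htriang : ∀ Δ₁ ∈ K₂, ∀ Δ₂ ∈ K₂, Δ₁ ≠ Δ₂ →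
      convexHull ℝ (Δ₁ : Set (ℝ × ℝ)) ∩ convexHull ℝ (Δ₂ : Set (ℝ × ℝ)) =
        convexHull ℝ ((Δ₁ ∩ Δ₂ : Finset (ℝ × ℝ)) : Set (ℝ × ℝ)))
    (Γ : OMGraph)
    (fV : Γ.V ≃ {Δ // Δ ∈ K₂}) (fE : Γ.E ≃ {e // e ∈ K₁})
    (hinc : ∀ (w : Γ.V) (E : Γ.E),
      ((Γ.ends E).1 = w ∨ (Γ.ends E).2 = w) ↔
        ((fE E : Finset (ℝ × ℝ)) : Set (ℝ × ℝ)) ⊆ ((fV w : Finset (ℝ × ℝ)) : Set (ℝ × ℝ))) :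
    Nonempty
      (ConnectedComponents
          (↥(((⋃ Δ ∈ K₂, convexHull ℝ ((Δ : Finset (ℝ × ℝ)) : Set (ℝ × ℝ))) ∪
              (⋃ e ∈ K₁, convexHull ℝ ((e : Finset (ℝ × ℝ)) : Set (ℝ × ℝ))) ∪
              (K₀ : Set (ℝ × ℝ))) \ (K₀ : Set (ℝ × ℝ)))) ≃
        Quot Γ.Adj) := by
  classical
  set S : Set (ℝ × ℝ) :=
    (⋃ Δ ∈ K₂, convexHull ℝ ((Δ : Finset (ℝ × ℝ)) : Set (ℝ × ℝ))) ∪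
      (⋃ e ∈ K₁, convexHull ℝ ((e : Finset (ℝ × ℝ)) : Set (ℝ × ℝ))) ∪
      (K₀ : Set (ℝ × ℝ)) with hSdef
  set X : Set (ℝ × ℝ) := S \ (K₀ : Set (ℝ × ℝ)) with hXdef
  set T : Γ.V → Set (ℝ × ℝ) :=
    fun w => convexHull ℝ (((fV w : Finset (ℝ × ℝ)) : Set (ℝ × ℝ))) with hTdef
  set A : Γ.V → Set (ℝ × ℝ) := fun w => T w \ (K₀ : Set (ℝ × ℝ)) with hAdef
  -- vertices of 2-cells are in K₀
  have hvertex : ∀ Δ ∈ K₂, ∀ v ∈ Δ, v ∈ K₀ := by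
    intro Δ hΔ v hv
    have h2 : 1 < Δ.card := by rw [h2card Δ hΔ]; omega
    obtain ⟨a, ha, b, hb, hab⟩ := Finset.one_lt_card.mp h2
    obtain ⟨u, hu, huv⟩ : ∃ u ∈ Δ, u ≠ v := by
      rcases eq_or_ne a v with rfl | hav
      · exact ⟨b, hb, fun hbv => hab hbv.symm⟩
      · exact ⟨a, ha, hav⟩
    have hpair : ({v, u} : Finset (ℝ × ℝ)) ⊆ Δ := by
      intro t ht
      rcases Finset.mem_insert.mp ht with rfl | ht
      · exact hv
      · exact (Finset.mem_singleton.mp ht) ▸ hu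
    have hcard2 : ({v, u} : Finset (ℝ × ℝ)).card = 2 := by
      rw [Finset.card_insert_of_notMem (by simpa using huv.symm)]
      simp
    exact hface10 _ (hface21 Δ hΔ _ hpair hcard2) v (Finset.mem_insert_self v _)
  -- the 2-cells are non-collinear, so `A w` is connected and nonempty
  have hAconn : ∀ w, IsConnected (A w) := by
    intro w
    refine my_convex_diff_finite_isConnected (convex_convexHull ℝ _) ?_ K₀.finite_toSet
    intro hc
    exact h2indep (fV w).1 (fV w).2 (hc.subset (subset_convexHull ℝ _))
  have hAne : ∀ w, (A w).Nonempty := fun w => (hAconn w).nonempty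
  choose p hp using hAne
  have hTclosed : ∀ w, IsClosed (T w) :=
    fun w => ((fV w).1.finite_toSet.isCompact_convexHull ℝ).isClosed
  have hTsubS : ∀ w, T w ⊆ S := by
    intro w x hx
    exact Or.inl (Or.inl (Set.mem_biUnion (fV w).2 hx))
  have hAX : ∀ w, A w ⊆ X := fun w x hx => ⟨hTsubS w hx.1, hx.2⟩
  -- every point of X lies in some A w
  have hcover : ∀ x : ℝ × ℝ, x ∈ X → ∃ w, x ∈ A w := by
    rintro x ⟨hxS, hxK⟩
    rcases hxS with (h2 | h1) | h0
    · simp only [Set.mem_iUnion] at h2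
      obtain ⟨Δ, hΔ, hx⟩ := h2
      refine ⟨fV.symm ⟨Δ, hΔ⟩, ⟨?_, hxK⟩⟩
      show x ∈ convexHull ℝ (((fV (fV.symm ⟨Δ, hΔ⟩) : Finset (ℝ × ℝ)) : Set (ℝ × ℝ)))
      rw [Equiv.apply_symm_apply]
      exact hx
    · simp only [Set.mem_iUnion] at h1
      obtain ⟨e, he, hx⟩ := h1
      set E : Γ.E := fE.symm ⟨e, he⟩ with hE
      set w : Γ.V := (Γ.ends E).1 with hw
      have hsub : ((fE E : Finset (ℝ × ℝ)) : Set (ℝ × ℝ)) ⊆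
          ((fV w : Finset (ℝ × ℝ)) : Set (ℝ × ℝ)) := (hinc w E).mp (Or.inl rfl)
      have hfe : (fE E : Finset (ℝ × ℝ)) = e := by rw [hE, Equiv.apply_symm_apply]
      refine ⟨w, ⟨?_, hxK⟩⟩
      have : x ∈ convexHull ℝ (((fE E : Finset (ℝ × ℝ)) : Set (ℝ × ℝ))) := by
        rw [hfe]; exact hx
      exact convexHull_min (hsub.trans (subset_convexHull ℝ _)) (convex_convexHull ℝ _) this
    · exact absurd h0 hxK
  -- overlapping 2-cells give equal classes in the graph quotient
  have hoverlap : ∀ w w' : Γ.V, ∀ x : ℝ × ℝ, x ∈ A w → x ∈ A w' →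
      Quot.mk Γ.Adj w = Quot.mk Γ.Adj w' := by
    intro w w' x hxw hxw'
    by_cases hww : w = w'
    · rw [hww]
    have hΔne : (fV w).1 ≠ (fV w').1 := fun h => hww (fV.injective (Subtype.ext h))
    have hxint : x ∈ convexHull ℝ ((((fV w).1 ∩ (fV w').1 : Finset (ℝ × ℝ)) : Set (ℝ × ℝ))) := by
      rw [← htriang (fV w).1 (fV w).2 (fV w').1 (fV w').2 hΔne]
      exact ⟨hxw.1, hxw'.1⟩
    have hcle : ((fV w).1 ∩ (fV w').1).card ≤ 3 :=
      le_trans (Finset.card_le_card Finset.inter_subset_left)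
        (le_of_eq (h2card _ (fV w).2))
    have h03 : ((fV w).1 ∩ (fV w').1).card = 0 ∨ ((fV w).1 ∩ (fV w').1).card = 1 ∨
        ((fV w).1 ∩ (fV w').1).card = 2 ∨ ((fV w).1 ∩ (fV w').1).card = 3 := by omega
    rcases h03 with hc | hc | hc | hc
    · rw [Finset.card_eq_zero.mp hc] at hxint
      simp at hxint
    · obtain ⟨v, hv⟩ := Finset.card_eq_one.mp hc
      rw [hv] at hxint
      simp only [Finset.coe_singleton, convexHull_singleton, Set.mem_singleton_iff] at hxint
      refine absurd ?_ hxw.2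
      subst hxint
      exact hvertex _ (fV w).2 x (by
        have : x ∈ (fV w).1 ∩ (fV w').1 := hv ▸ Finset.mem_singleton_self x
        exact Finset.mem_of_mem_inter_left this)
    · have heK : (fV w).1 ∩ (fV w').1 ∈ K₁ :=
        hface21 (fV w).1 (fV w).2 _ Finset.inter_subset_left hc
      set E : Γ.E := fE.symm ⟨(fV w).1 ∩ (fV w').1, heK⟩ with hEdef
      have hfe : (fE E : Finset (ℝ × ℝ)) = (fV w).1 ∩ (fV w').1 := by
        rw [hEdef, Equiv.apply_symm_apply]
      have h1 : (Γ.ends E).1 = w ∨ (Γ.ends E).2 = w := by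
        refine (hinc w E).mpr ?_
        rw [hfe]
        exact Finset.coe_subset.mpr Finset.inter_subset_left
      have h2 : (Γ.ends E).1 = w' ∨ (Γ.ends E).2 = w' := by
        refine (hinc w' E).mpr ?_
        rw [hfe]
        exact Finset.coe_subset.mpr Finset.inter_subset_right
      have hadj : w = w' ∨ Γ.Adj w w' := by
        rcases h1 with h1 | h1 <;> rcases h2 with h2 | h2
        · exact Or.inl (h1 ▸ h2)
        · exact Or.inr ⟨E, Or.inl (by rw [← h1, ← h2])⟩
        · exact Or.inr ⟨E, Or.inr (by rw [← h1, ← h2])⟩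
        · exact Or.inl (h1 ▸ h2)
      rcases hadj with rfl | hadj
      · rfl
      · exact Quot.sound hadj
    · have h1 : (fV w).1 ∩ (fV w').1 = (fV w).1 :=
        Finset.eq_of_subset_of_card_le Finset.inter_subset_left
          (by rw [h2card _ (fV w).2, hc])
      have h2 : (fV w).1 ⊆ (fV w').1 := by
        rw [← h1]; exact Finset.inter_subset_right
      exact absurd (Finset.eq_of_subset_of_card_le h2
        (by rw [h2card _ (fV w).2, h2card _ (fV w').2])) hΔne
  -- adjacent vertices give overlapping cells
  have hglue : ∀ w w' : Γ.V, Γ.Adj w w' → (A w ∩ A w').Nonempty := by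
    rintro w w' ⟨E, hE⟩
    obtain ⟨a, b, hab, habe⟩ := Finset.card_eq_two.mp (h1card (fE E).1 (fE E).2)
    have hcoe : (((fE E).1 : Finset (ℝ × ℝ)) : Set (ℝ × ℝ)) = {a, b} := by
      rw [habe]; simp
    have hsegsub : ∀ v : Γ.V, ((Γ.ends E).1 = v ∨ (Γ.ends E).2 = v) →
        segment ℝ a b ⊆ T v := by
      intro v hv
      have hsub : (((fE E).1 : Finset (ℝ × ℝ)) : Set (ℝ × ℝ)) ⊆
          ((fV v : Finset (ℝ × ℝ)) : Set (ℝ × ℝ)) := (hinc v E).mp hv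
      calc segment ℝ a b = convexHull ℝ ({a, b} : Set (ℝ × ℝ)) := (convexHull_pair a b).symm
        _ = convexHull ℝ ((((fE E).1 : Finset (ℝ × ℝ)) : Set (ℝ × ℝ))) := by rw [hcoe]
        _ ⊆ T v := convexHull_mono hsub
    have hw : segment ℝ a b ⊆ T w := by
      refine hsegsub w ?_
      rcases hE with h | h
      · exact Or.inl (by rw [h])
      · exact Or.inr (by rw [h])
    have hw' : segment ℝ a b ⊆ T w' := by
      refine hsegsub w' ?_
      rcases hE with h | h
      · exact Or.inr (by rw [h])
      · exact Or.inl (by rw [h])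
    obtain ⟨z, hz⟩ := ((my_segment_infinite hab).diff K₀.finite_toSet).nonempty
    exact ⟨z, ⟨hw hz.1, hz.2⟩, ⟨hw' hz.1, hz.2⟩⟩
  -- points of X lying in a common A w are in the same connected component
  set P : Γ.V → ↥X := fun w => ⟨p w, hAX w (hp w)⟩ with hPdef
  have samecomp : ∀ (u v : ↥X) (w : Γ.V), (u : ℝ × ℝ) ∈ A w → (v : ℝ × ℝ) ∈ A w →
      (ConnectedComponents.mk u : ConnectedComponents ↥X) = ConnectedComponents.mk v := by
    intro u v w hu hv
    refine ConnectedComponents.coe_eq_coe.mpr ?_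
    have hind : Topology.IsInducing (Subtype.val : ↥X → ℝ × ℝ) := Topology.IsInducing.subtypeVal
    have hpre : IsPreconnected ((Subtype.val ⁻¹' A w : Set ↥X)) := by
      refine (hind.isPreconnected_image).mp ?_
      have himg : (Subtype.val '' (Subtype.val ⁻¹' A w : Set ↥X)) = A w := by
        rw [Subtype.image_preimage_coe]
        exact Set.inter_eq_self_of_subset_right (hAX w)
      rw [himg]
      exact (hAconn w).isPreconnected
    have hsub := hpre.subset_connectedComponent (show u ∈ _ from hu)
    exact connectedComponent_eq (hsub (show v ∈ _ from hv))
  have hstep : ∀ w w' : Γ.V, Γ.Adj w w' →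
      (ConnectedComponents.mk (P w) : ConnectedComponents ↥X) = ConnectedComponents.mk (P w') := by
    intro w w' hadj
    obtain ⟨z, hz1, hz2⟩ := hglue w w' hadj
    have hzX : z ∈ X := hAX w hz1
    calc (ConnectedComponents.mk (P w) : ConnectedComponents ↥X)
        = ConnectedComponents.mk ⟨z, hzX⟩ := samecomp _ _ w (hp w) hz1
      _ = ConnectedComponents.mk (P w') := samecomp _ _ w' hz2 (hp w')
  -- the map from the graph quotient to connected components
  set g : Quot Γ.Adj → ConnectedComponents ↥X :=
    Quot.lift (fun w => (ConnectedComponents.mk (P w) : ConnectedComponents ↥X)) hstep with hgdef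
  have hsurj : Function.Surjective g := by
    intro c
    obtain ⟨x, rfl⟩ := ConnectedComponents.surjective_coe c
    obtain ⟨w, hw⟩ := hcover x.1 x.2
    exact ⟨Quot.mk _ w, samecomp (P w) x w (hp w) hw⟩
  have hinj : Function.Injective g := by
    intro q₁ q₂ hq
    induction q₁ using Quot.ind with | _ w => ?_
    induction q₂ using Quot.ind with | _ w' => ?_
    by_contra hne
    have hcomp : connectedComponent (P w) = connectedComponent (P w') :=
      ConnectedComponents.coe_eq_coe.mp hq
    set U : Set (ℝ × ℝ) := ⋃ v ∈ {v : Γ.V | Quot.mk Γ.Adj v = Quot.mk Γ.Adj w}, T v with hUdef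
    set W : Set (ℝ × ℝ) := ⋃ v ∈ {v : Γ.V | ¬ Quot.mk Γ.Adj v = Quot.mk Γ.Adj w}, T v with hWdef
    have hUc : IsClosed U := Set.Finite.isClosed_biUnion (Set.toFinite _) fun v _ => hTclosed v
    have hWc : IsClosed W := Set.Finite.isClosed_biUnion (Set.toFinite _) fun v _ => hTclosed v
    set C : Set (ℝ × ℝ) := Subtype.val '' (connectedComponent (P w) : Set ↥X) with hCdef
    have hind : Topology.IsInducing (Subtype.val : ↥X → ℝ × ℝ) := Topology.IsInducing.subtypeVal
    have hCpre : IsPreconnected C :=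
      (hind.isPreconnected_image).mpr isPreconnected_connectedComponent
    have hCX : C ⊆ X := by rintro z ⟨u, _, rfl⟩; exact u.2
    have hCUV : C ⊆ U ∪ W := by
      rintro z ⟨u, _, rfl⟩
      obtain ⟨v, hv⟩ := hcover u.1 u.2
      by_cases hvc : Quot.mk Γ.Adj v = Quot.mk Γ.Adj w
      · exact Or.inl (Set.mem_biUnion hvc hv.1)
      · exact Or.inr (Set.mem_biUnion hvc hv.1)
    have hCU : (C ∩ U).Nonempty :=
      ⟨p w, ⟨P w, mem_connectedComponent, rfl⟩,
        Set.mem_biUnion (show Quot.mk Γ.Adj w = Quot.mk Γ.Adj w from rfl) (hp w).1⟩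
    have hCW : (C ∩ W).Nonempty := by
      refine ⟨p w', ⟨P w', ?_, rfl⟩,
        Set.mem_biUnion (show ¬ Quot.mk Γ.Adj w' = Quot.mk Γ.Adj w from fun h => hne h.symm)
          (hp w').1⟩
      rw [hcomp]
      exact mem_connectedComponent
    obtain ⟨z, hzC, hzU, hzW⟩ := isPreconnected_closed_iff.mp hCpre U W hUc hWc hCUV hCU hCW
    have hzK : z ∉ (K₀ : Set (ℝ × ℝ)) := (hCX hzC).2
    rw [hUdef] at hzU
    rw [hWdef] at hzW
    simp only [Set.mem_iUnion, Set.mem_setOf_eq] at hzU hzW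
    obtain ⟨v₁, hv₁, hzT₁⟩ := hzU
    obtain ⟨v₂, hv₂, hzT₂⟩ := hzW
    exact hv₂ ((hoverlap v₂ v₁ z ⟨hzT₂, hzK⟩ ⟨hzT₁, hzK⟩).trans hv₁)
  exact ⟨(Equiv.ofBijective g ⟨hinj, hsurj⟩).symm⟩
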